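/- Let k > 0 and let ψ : ℝ → ℝ³ be the logarithmic spiral in the (x,z)-plane, ψ(s) = (e^{k s} cos s, 0, e^{k s} sin s). Let t ≥ 0, let v = ψ(0) + (0, t, 0), and let w = ψ(r) for some r ≥ 0 with w ≠ ψ(0) or t > 0 (i.e., v ≠ w). Then (t + ∫_0^r ‖ψ'(u)‖ du) / ‖v − w‖ ≤ √(2k² + 1) / k. -/

import Mathlib

open Real

lemma spiral_aux_norm3 (a b c : ℝ) :
    ‖(WithLp.equiv 2 (Fin 3 → ℝ)).symm ![a, b, c]‖ = Real.sqrt (a^2 + b^2 + c^2) := by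
  rw [EuclideanSpace.norm_eq]
  simp [Fin.sum_univ_three, WithLp.equiv_symm_apply, PiLp.toLp_apply, sq_abs]

lemma spiral_aux_hasDerivAt (k : ℝ) (u : ℝ) :
    HasDerivAt (fun s => (WithLp.equiv 2 (Fin 3 → ℝ)).symm
      ![Real.exp (k * s) * Real.cos s, 0, Real.exp (k * s) * Real.sin s])
      ((WithLp.equiv 2 (Fin 3 → ℝ)).symm
      ![Real.exp (k * u) * (k * Real.cos u - Real.sin u), 0,
        Real.exp (k * u) * (k * Real.sin u + Real.cos u)]) u := by
  have hF : HasDerivAt (fun s : ℝ => (![Real.exp (k * s) * Real.cos s, 0,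
      Real.exp (k * s) * Real.sin s] : Fin 3 → ℝ))
      (![Real.exp (k * u) * (k * Real.cos u - Real.sin u), 0,
        Real.exp (k * u) * (k * Real.sin u + Real.cos u)]) u := by
    rw [hasDerivAt_pi]
    intro i
    fin_cases i <;> simp only [Matrix.cons_val_zero, Matrix.cons_val_one, Matrix.head_cons,
      Matrix.cons_val_two, Matrix.tail_cons]
    · have := (((hasDerivAt_id u).const_mul k).exp).mul (Real.hasDerivAt_cos u)
      exact this.congr_deriv (by simp; ring)
    · exact hasDerivAt_const u 0
    · have := (((hasDerivAt_id u).const_mul k).exp).mul (Real.hasDerivAt_sin u)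
      exact this.congr_deriv (by simp; ring)
  exact ((EuclideanSpace.equiv (Fin 3) ℝ).symm.toContinuousLinearMap).hasFDerivAt.comp_hasDerivAt
    u hF

set_option maxHeartbeats 1000000 in
/-- Case 2 estimate for the logarithmic spiral in the `(x,z)`-plane of `ℝ³`:
if `v = ψ(0) + (0, t, 0)` with `t ≥ 0` lies on the perpendicular line through
`ψ(0) = (1,0,0)` and `w = ψ(r)` with `r ≥ 0`, `v ≠ w`, then the ratio of the
path length `t + ∫_0^r ‖ψ'‖` to the Euclidean distance `‖v − w‖` is at most
`√(2k² + 1)/k`. -/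
theorem spiral_perp_line_estimate (k : ℝ) (hk : 0 < k)
    (ψ : ℝ → EuclideanSpace ℝ (Fin 3))
    (hψ : ψ = fun s => (WithLp.equiv 2 (Fin 3 → ℝ)).symm
      ![Real.exp (k * s) * Real.cos s, 0, Real.exp (k * s) * Real.sin s])
    (t r : ℝ) (ht : 0 ≤ t) (hr : 0 ≤ r)
    (v w : EuclideanSpace ℝ (Fin 3))
    (hv : v = ψ 0 + (WithLp.equiv 2 (Fin 3 → ℝ)).symm ![0, t, 0])
    (hw : w = ψ r) (hvw : v ≠ w) :
    (t + ∫ u in (0:ℝ)..r, ‖deriv ψ u‖) / ‖v - w‖ ≤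
      Real.sqrt (2 * k ^ 2 + 1) / k := by
  set q := Real.sqrt (k ^ 2 + 1) with hqdef
  have hq2 : q ^ 2 = k ^ 2 + 1 := Real.sq_sqrt (by positivity)
  have hq0 : 0 ≤ q := Real.sqrt_nonneg _
  set E := Real.exp (k * r) with hEdef
  have hE1 : 1 ≤ E := by
    rw [hEdef]; nlinarith [Real.add_one_le_exp (k * r), mul_nonneg hk.le hr]
  -- norm of the derivative
  have hnorm : ∀ u, ‖deriv ψ u‖ = Real.exp (k * u) * q := by
    intro u
    have hd := spiral_aux_hasDerivAt k u
    rw [← hψ] at hd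
    rw [hd.deriv, spiral_aux_norm3]
    have h1 : (Real.exp (k*u) * (k * Real.cos u - Real.sin u))^2 + 0^2
        + (Real.exp (k*u) * (k * Real.sin u + Real.cos u))^2
        = (Real.exp (k*u))^2 * (k^2+1) := by
      nlinarith [Real.sin_sq_add_cos_sq u]
    rw [h1, Real.sqrt_mul (by positivity), Real.sqrt_sq (Real.exp_nonneg _), hqdef]
  -- the arc length integral
  have hI : (∫ u in (0:ℝ)..r, ‖deriv ψ u‖) = q * (E - 1) / k := by
    have hcongr : (∫ u in (0:ℝ)..r, ‖deriv ψ u‖)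
        = ∫ u in (0:ℝ)..r, Real.exp (k*u) * q := by
      apply intervalIntegral.integral_congr
      intro u _
      exact hnorm u
    rw [hcongr]
    have hFT : ∀ u ∈ Set.uIcc (0:ℝ) r, HasDerivAt (fun x => Real.exp (k*x) * q / k)
        (Real.exp (k*u) * q) u := by
      intro u _
      have := ((((hasDerivAt_id u).const_mul k).exp).mul_const q).div_const k
      exact this.congr_deriv (by simp only [id, mul_one]; field_simp)
    rw [intervalIntegral.integral_eq_sub_of_hasDerivAt hFT
      (by apply Continuous.intervalIntegrable; continuity)]
    rw [hEdef]
    field_simp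
    rw [mul_zero, Real.exp_zero]
  -- the difference vector
  have hvwvec : v - w = (WithLp.equiv 2 (Fin 3 → ℝ)).symm
      ![1 - E * Real.cos r, t, -(E * Real.sin r)] := by
    rw [hEdef]
    subst hv hw hψ
    ext i
    fin_cases i <;>
      simp [WithLp.equiv_symm_apply, PiLp.toLp_apply, PiLp.sub_apply, PiLp.add_apply]
  have hvwnorm : ‖v - w‖ = Real.sqrt ((1 - E * Real.cos r)^2 + t^2 + (E * Real.sin r)^2) := by
    rw [hvwvec, spiral_aux_norm3]; ring_nf
  have hpos : 0 < ‖v - w‖ := norm_pos_iff.mpr (sub_ne_zero.mpr hvw)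
  have hvw2 : ‖v - w‖^2 = (1 - E * Real.cos r)^2 + t^2 + (E * Real.sin r)^2 := by
    rw [hvwnorm, Real.sq_sqrt (by positivity)]
  clear_value q E
  clear hqdef hEdef
  rw [hI, div_le_div_iff₀ hpos hk]
  have hL : 0 ≤ t + q * (E - 1) / k :=
    add_nonneg ht (div_nonneg (mul_nonneg hq0 (sub_nonneg.2 hE1)) hk.le)
  have hRHS : Real.sqrt (2 * k ^ 2 + 1) * ‖v - w‖
      = Real.sqrt ((2 * k ^ 2 + 1) * ‖v - w‖ ^ 2) := by
    rw [Real.sqrt_mul (by positivity), Real.sqrt_sq hpos.le]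
  rw [hRHS, Real.le_sqrt (mul_nonneg hL hk.le) (by positivity), hvw2]
  have hrw : (t + q * (E - 1) / k) * k = t * k + q * (E - 1) := by field_simp
  rw [hrw]
  have hchord : (E - 1) ^ 2 ≤ (1 - E * Real.cos r) ^ 2 + (E * Real.sin r) ^ 2 := by
    nlinarith [Real.sin_sq_add_cos_sq r,
      mul_nonneg (sub_nonneg.2 (Real.cos_le_one r)) (le_trans zero_le_one hE1)]
  nlinarith [sq_nonneg (t * q - k * (E - 1)), hq2, hchord,
    mul_le_mul_of_nonneg_left hchord (by positivity : (0:ℝ) ≤ 2 * k ^ 2 + 1)]
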